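/- Suppose there is a sequence of Newman polynomials p_n with deg p_n → ∞, ‖p_n‖_1 ≥ c₀ deg p_n for some c₀ > 0, and R(p_n) ≤ ρ / deg p_n. Then for every ρ' > ρ there exists a sequence of Newman polynomials q_n with deg q_n → ∞, ‖q_n‖_1 = o(deg q_n), and R(q_n) ≤ ρ' / deg q_n. -/

import Mathlib

open Polynomial Filter

/-- A Newman polynomial has every coefficient equal to 0 or 1. -/
def IsNewman (p : Polynomial ℝ) : Prop := ∀ k, p.coeff k = 0 ∨ p.coeff k = 1

/-- The maximum coefficient of a polynomial. -/
noncomputable def maxCoeff (p : Polynomial ℝ) : ℝ := ⨆ k : ℕ, p.coeff k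

/-- The sum of the coefficients of a polynomial. -/
noncomputable def coeffSum (p : Polynomial ℝ) : ℝ :=
  ∑ j ∈ Finset.range (p.natDegree + 1), p.coeff j

/-- `R(f) = ‖f²‖_∞ / ‖f‖₁²`. -/
noncomputable def Rquot (f : Polynomial ℝ) : ℝ := maxCoeff (f ^ 2) / (coeffSum f) ^ 2

set_option maxHeartbeats 1000000 in
section
namespace NmAux



/-- the Newman polynomial with exponent set `A` -/
noncomputable def pol (A : Finset ℕ) : Polynomial ℝ := ∑ a ∈ A, X ^ a

/-- number of representations of `n` as sum of two elements of `A` (ordered) -/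
def rep (A : Finset ℕ) (n : ℕ) : ℕ :=
  ((A ×ˢ A).filter fun q => q.1 + q.2 = n).card

/-- cyclic representation count mod `M` -/
def cyc (M : ℕ) (A : Finset ℕ) (r : ℕ) : ℕ :=
  ((A ×ˢ A).filter fun q => (q.1 + q.2) % M = r % M).card

lemma coeff_pol (A : Finset ℕ) (n : ℕ) :
    (pol A).coeff n = if n ∈ A then (1:ℝ) else 0 := by
  rw [pol, finset_sum_coeff]
  simp [coeff_X_pow]

lemma isNewman_pol (A : Finset ℕ) : IsNewman (pol A) := by
  intro k; rw [coeff_pol]; split <;> simp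

lemma support_pol (A : Finset ℕ) : (pol A).support = A := by
  ext n
  rw [mem_support_iff, coeff_pol]
  split <;> simp_all

lemma pol_ne_zero {A : Finset ℕ} (hA : A.Nonempty) : pol A ≠ 0 := by
  intro h
  obtain ⟨a, ha⟩ := hA
  have := coeff_pol A a
  rw [h] at this
  simp [ha] at this

lemma natDegree_pol {A : Finset ℕ} (hA : A.Nonempty) :
    (pol A).natDegree = A.max' hA := by
  apply le_antisymm
  · apply natDegree_le_iff_coeff_eq_zero.2
    intro n hn
    rw [coeff_pol, if_neg]
    intro hmem
    exact absurd (A.le_max' n hmem) (not_le.2 hn)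
  · apply le_natDegree_of_ne_zero
    rw [coeff_pol, if_pos (A.max'_mem hA)]
    norm_num

lemma coeffSum_pol {A : Finset ℕ} (hA : A.Nonempty) :
    coeffSum (pol A) = (A.card : ℝ) := by
  rw [coeffSum]
  have h1 : ∀ j ∈ Finset.range ((pol A).natDegree + 1), (pol A).coeff j
      = if j ∈ A then (1:ℝ) else 0 := fun j _ => coeff_pol A j
  rw [Finset.sum_congr rfl h1, Finset.sum_ite_mem]
  have h2 : Finset.range ((pol A).natDegree + 1) ∩ A = A := by
    apply Finset.inter_eq_right.2
    intro a ha
    rw [Finset.mem_range, natDegree_pol hA]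
    exact Nat.lt_succ_of_le (A.le_max' a ha)
  rw [h2]
  simp

lemma coeff_pol_sq (A : Finset ℕ) (n : ℕ) :
    ((pol A) ^ 2).coeff n = (rep A n : ℝ) := by
  rw [sq, pol, Finset.sum_mul_sum]
  have : ∀ a ∈ A, ∀ b ∈ A, ((X:ℝ[X]) ^ a * X ^ b) = X ^ (a + b) := by
    intros; rw [← pow_add]
  rw [Finset.sum_congr rfl fun a ha => Finset.sum_congr rfl fun b hb => this a ha b hb]
  rw [finset_sum_coeff]
  have : ∀ a ∈ A, (∑ b ∈ A, ((X:ℝ[X]) ^ (a + b))).coeff n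
      = ∑ b ∈ A, if a + b = n then (1:ℝ) else 0 := by
    intro a _
    rw [finset_sum_coeff]
    refine Finset.sum_congr rfl fun b _ => ?_
    rw [coeff_X_pow]
    simp [eq_comm]
  rw [Finset.sum_congr rfl this]
  rw [rep, Finset.card_filter]
  push_cast
  rw [Finset.sum_product]



/-- `B + M • C` -/
def comp (B : Finset ℕ) (M : ℕ) (C : Finset ℕ) : Finset ℕ :=
  (B ×ˢ C).image fun q => q.1 + M * q.2

lemma mem_comp {B C : Finset ℕ} {M a : ℕ} :
    a ∈ comp B M C ↔ ∃ b ∈ B, ∃ c ∈ C, b + M * c = a := by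
  simp [comp]
  constructor
  · rintro ⟨b, c, h, rfl⟩; exact ⟨b, h.1, c, h.2, rfl⟩
  · rintro ⟨b, hb, c, hc, rfl⟩; exact ⟨b, c, ⟨hb, hc⟩, rfl⟩

lemma comp_decomp {B C : Finset ℕ} {M : ℕ} (hB : ∀ b ∈ B, b < M) {a : ℕ}
    (ha : a ∈ comp B M C) : a % M ∈ B ∧ a / M ∈ C := by
  obtain ⟨b, hb, c, hc, rfl⟩ := mem_comp.1 ha
  have hbM := hB b hb
  have hM : 0 < M := by omega
  rw [Nat.add_mul_mod_self_left, Nat.mod_eq_of_lt hbM,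
    Nat.add_mul_div_left _ _ hM, Nat.div_eq_of_lt hbM]
  exact ⟨hb, by simpa using hc⟩

lemma comp_subset_range {B C : Finset ℕ} {M N : ℕ} (hB : ∀ b ∈ B, b < M)
    (hC : ∀ c ∈ C, c < N) : ∀ a ∈ comp B M C, a < M * N := by
  intro a ha
  obtain ⟨b, hb, c, hc, rfl⟩ := mem_comp.1 ha
  have h1 := hB b hb
  have h2 := hC c hc
  have : c + 1 ≤ N := h2
  calc b + M * c < M + M * c := by omega
  _ = M * (c+1) := by ring
  _ ≤ M * N := Nat.mul_le_mul_left M this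

lemma card_comp {B C : Finset ℕ} {M : ℕ} (hB : ∀ b ∈ B, b < M) :
    (comp B M C).card = B.card * C.card := by
  rw [comp, Finset.card_image_of_injOn, Finset.card_product]
  rintro ⟨b, c⟩ h ⟨b', c'⟩ h' heq
  simp only [Finset.coe_product, Set.mem_prod, Finset.mem_coe] at h h'
  have heq' : b + M * c = b' + M * c' := heq
  have h1 := hB b h.1
  have h2 := hB b' h'.1
  have hb : b = b' := by
    have := congrArg (· % M) heq'
    simpa [Nat.add_mul_mod_self_left, Nat.mod_eq_of_lt h1, Nat.mod_eq_of_lt h2] using this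
  have : M * c = M * c' := by omega
  have hc : c = c' := by
    have hM : 0 < M := by omega
    exact Nat.eq_of_mul_eq_mul_left hM this
  simp [hb, hc]

/-- An element of `comp B M C` realizing the max degree bound from below. -/
lemma comp_max_lower {B C : Finset ℕ} {M : ℕ} (hBne : B.Nonempty) {c : ℕ} (hc : c ∈ C) :
    ∃ a ∈ comp B M C, M * c ≤ a := by
  obtain ⟨b, hb⟩ := hBne
  exact ⟨b + M * c, mem_comp.2 ⟨b, hb, c, hc, rfl⟩, by omega⟩



lemma mod_div_eq (M a : ℕ) : a = a % M + M * (a / M) := by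
  rw [Nat.mod_add_div]

/-- Lemma B : cyclic flatness composes. -/
lemma cyc_comp_le {B C : Finset ℕ} {M N K K' : ℕ}
    (hB : ∀ b ∈ B, b < M) (hM : 0 < M)
    (hcycB : ∀ r, cyc M B r ≤ K) (hcycC : ∀ s, cyc N C s ≤ K') :
    ∀ r, cyc (M*N) (comp B M C) r ≤ K * K' := by
  intro r
  set A := comp B M C with hA
  set T : Finset (ℕ × ℕ) := (B ×ˢ B).filter (fun q => (q.1 + q.2) % M = r % M) with hT
  have key : ∀ q ∈ (A ×ˢ A).filter (fun q => (q.1 + q.2) % (M*N) = r % (M*N)),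
      (q.1 % M, q.2 % M) ∈ T := by
    rintro ⟨a1, a2⟩ hq
    simp only [Finset.mem_filter, Finset.mem_product] at hq
    obtain ⟨⟨h1, h2⟩, h3⟩ := hq
    simp only [hT, Finset.mem_filter, Finset.mem_product]
    refine ⟨⟨(comp_decomp hB h1).1, (comp_decomp hB h2).1⟩, ?_⟩
    have : (a1 % M + a2 % M) % M = (a1 + a2) % M := by
      conv_rhs => rw [Nat.add_mod]
    rw [this, ← Nat.mod_mod_of_dvd (a1+a2) ⟨N, rfl⟩, h3, Nat.mod_mod_of_dvd r ⟨N, rfl⟩]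
  rw [cyc, Finset.card_eq_sum_card_fiberwise key]
  have hTcard : T.card ≤ K := hcycB r
  have fib : ∀ t ∈ T,
      (((A ×ˢ A).filter (fun q => (q.1 + q.2) % (M*N) = r % (M*N))).filter
        (fun q => (q.1 % M, q.2 % M) = t)).card ≤ K' := by
    intro t ht
    set F := ((A ×ˢ A).filter (fun q => (q.1 + q.2) % (M*N) = r % (M*N))).filter
        (fun q => (q.1 % M, q.2 % M) = t) with hF
    rcases Finset.eq_empty_or_nonempty F with he | ⟨q₀, hq₀⟩
    · simp [he]
    · set s := q₀.1 / M + q₀.2 / M with hs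
      have hchain : F.card ≤ cyc N C s := by
        rw [cyc]
        apply Finset.card_le_card_of_injOn (fun q => (q.1 / M, q.2 / M))
        · -- maps into target
          intro q hq
          simp only [hF, Finset.mem_coe, Finset.mem_filter, Finset.mem_product] at hq hq₀
          obtain ⟨⟨⟨m1, m2⟩, hmod⟩, hgt⟩ := hq
          obtain ⟨⟨⟨m01, m02⟩, hmod0⟩, hgt0⟩ := hq₀
          simp only [Finset.mem_coe, Finset.mem_filter, Finset.mem_product]
          refine ⟨⟨(comp_decomp hB m1).2, (comp_decomp hB m2).2⟩, ?_⟩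
          -- show (q.1/M + q.2/M) % N = s % N
          have e1 : q.1 + q.2 = (t.1 + t.2) + M * (q.1 / M + q.2 / M) := by
            have d1 := mod_div_eq M q.1
            have d2 := mod_div_eq M q.2
            have hdist : M * (q.1 / M + q.2 / M) = M * (q.1/M) + M * (q.2/M) := by ring
            have : q.1 % M = t.1 ∧ q.2 % M = t.2 := by
              constructor <;> [exact congrArg Prod.fst hgt; exact congrArg Prod.snd hgt]
            omega
          have e0 : q₀.1 + q₀.2 = (t.1 + t.2) + M * s := by
            have d1 := mod_div_eq M q₀.1
            have d2 := mod_div_eq M q₀.2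
            have hdist : M * s = M * (q₀.1/M) + M * (q₀.2/M) := by rw [hs]; ring
            have : q₀.1 % M = t.1 ∧ q₀.2 % M = t.2 := by
              constructor <;> [exact congrArg Prod.fst hgt0; exact congrArg Prod.snd hgt0]
            omega
          have hmm : ((t.1 + t.2) + M * (q.1/M + q.2/M)) % (M*N)
              = ((t.1 + t.2) + M * s) % (M*N) := by
            rw [← e1, ← e0, hmod, hmod0]
          have : (M * (q.1/M + q.2/M)) % (M*N) = (M * s) % (M*N) :=
            Nat.ModEq.add_left_cancel' _ hmm
          rw [Nat.mul_mod_mul_left, Nat.mul_mod_mul_left] at this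
          exact Nat.eq_of_mul_eq_mul_left hM this
        · -- injective
          intro q hq q' hq' heq
          simp only [hF, Finset.mem_coe, Finset.mem_filter] at hq hq'
          have h1 : q.1 % M = t.1 := congrArg Prod.fst hq.2
          have h2 : q.2 % M = t.2 := congrArg Prod.snd hq.2
          have h1' : q'.1 % M = t.1 := congrArg Prod.fst hq'.2
          have h2' : q'.2 % M = t.2 := congrArg Prod.snd hq'.2
          have g1 : q.1 / M = q'.1 / M := congrArg Prod.fst heq
          have g2 : q.2 / M = q'.2 / M := congrArg Prod.snd heq
          have d1 := mod_div_eq M q.1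
          have d2 := mod_div_eq M q.2
          have d1' := mod_div_eq M q'.1
          have d2' := mod_div_eq M q'.2
          have e1 : M * (q.1 / M) = M * (q'.1 / M) := by rw [g1]
          have e2 : M * (q.2 / M) = M * (q'.2 / M) := by rw [g2]
          ext <;> omega
      exact hchain.trans (hcycC s)
  calc ∑ t ∈ T, (((A ×ˢ A).filter (fun q => (q.1 + q.2) % (M*N) = r % (M*N))).filter
        (fun q => (q.1 % M, q.2 % M) = t)).card
      ≤ ∑ t ∈ T, K' := Finset.sum_le_sum fib
    _ = T.card * K' := by rw [Finset.sum_const, smul_eq_mul]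
    _ ≤ K * K' := Nat.mul_le_mul_right K' hTcard


/-- Lemma A : bound on plain representation counts of a composition. -/
lemma rep_comp_le {B C : Finset ℕ} {M K : ℕ} (x : ℝ)
    (hB : ∀ b ∈ B, b < M) (hM : 0 < M)
    (hcycB : ∀ r, cyc M B r ≤ K) (hx : 0 ≤ x) (hC : ∀ γ, (rep C γ : ℝ) ≤ x) :
    ∀ n, (rep (comp B M C) n : ℝ) ≤ (K : ℝ) * x := by
  intro n
  set A := comp B M C with hA
  set T : Finset (ℕ × ℕ) := (B ×ˢ B).filter (fun q => (q.1 + q.2) % M = n % M) with hT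
  have key : ∀ q ∈ (A ×ˢ A).filter (fun q => q.1 + q.2 = n),
      (q.1 % M, q.2 % M) ∈ T := by
    rintro ⟨a1, a2⟩ hq
    simp only [Finset.mem_filter, Finset.mem_product] at hq
    obtain ⟨⟨h1, h2⟩, h3⟩ := hq
    simp only [hT, Finset.mem_filter, Finset.mem_product]
    refine ⟨⟨(comp_decomp hB h1).1, (comp_decomp hB h2).1⟩, ?_⟩
    have : (a1 % M + a2 % M) % M = (a1 + a2) % M := by
      conv_rhs => rw [Nat.add_mod]
    rw [this, h3]
  have hrep : rep A n = ∑ t ∈ T, (((A ×ˢ A).filter (fun q => q.1 + q.2 = n)).filter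
      (fun q => (q.1 % M, q.2 % M) = t)).card := by
    rw [rep, Finset.card_eq_sum_card_fiberwise key]
  have fib : ∀ t ∈ T,
      ((((A ×ˢ A).filter (fun q => q.1 + q.2 = n)).filter
        (fun q => (q.1 % M, q.2 % M) = t)).card : ℝ) ≤ x := by
    intro t ht
    set F := ((A ×ˢ A).filter (fun q => q.1 + q.2 = n)).filter
        (fun q => (q.1 % M, q.2 % M) = t) with hF
    rcases Finset.eq_empty_or_nonempty F with he | ⟨q₀, hq₀⟩
    · simp [he]; exact hx
    · set s := q₀.1 / M + q₀.2 / M with hs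
      have hchain : F.card ≤ rep C s := by
        rw [rep]
        apply Finset.card_le_card_of_injOn (fun q => (q.1 / M, q.2 / M))
        · intro q hq
          simp only [hF, Finset.mem_coe, Finset.mem_filter, Finset.mem_product] at hq hq₀
          obtain ⟨⟨⟨m1, m2⟩, hmod⟩, hgt⟩ := hq
          obtain ⟨⟨⟨m01, m02⟩, hmod0⟩, hgt0⟩ := hq₀
          simp only [Finset.mem_coe, Finset.mem_filter, Finset.mem_product]
          refine ⟨⟨(comp_decomp hB m1).2, (comp_decomp hB m2).2⟩, ?_⟩
          have d1 := mod_div_eq M q.1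
          have d2 := mod_div_eq M q.2
          have d01 := mod_div_eq M q₀.1
          have d02 := mod_div_eq M q₀.2
          have hdist : M * (q.1 / M + q.2 / M) = M * (q.1/M) + M * (q.2/M) := by ring
          have hdist0 : M * s = M * (q₀.1/M) + M * (q₀.2/M) := by rw [hs]; ring
          have ht1 : q.1 % M = t.1 := congrArg Prod.fst hgt
          have ht2 : q.2 % M = t.2 := congrArg Prod.snd hgt
          have ht01 : q₀.1 % M = t.1 := congrArg Prod.fst hgt0
          have ht02 : q₀.2 % M = t.2 := congrArg Prod.snd hgt0
          have : M * (q.1 / M + q.2 / M) = M * s := by omega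
          exact Nat.eq_of_mul_eq_mul_left hM this
        · intro q hq q' hq' heq
          simp only [hF, Finset.mem_coe, Finset.mem_filter] at hq hq'
          have h1 : q.1 % M = t.1 := congrArg Prod.fst hq.2
          have h2 : q.2 % M = t.2 := congrArg Prod.snd hq.2
          have h1' : q'.1 % M = t.1 := congrArg Prod.fst hq'.2
          have h2' : q'.2 % M = t.2 := congrArg Prod.snd hq'.2
          have g1 : q.1 / M = q'.1 / M := congrArg Prod.fst heq
          have g2 : q.2 / M = q'.2 / M := congrArg Prod.snd heq
          have d1 := mod_div_eq M q.1
          have d2 := mod_div_eq M q.2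
          have d1' := mod_div_eq M q'.1
          have d2' := mod_div_eq M q'.2
          have e1 : M * (q.1 / M) = M * (q'.1 / M) := by rw [g1]
          have e2 : M * (q.2 / M) = M * (q'.2 / M) := by rw [g2]
          ext <;> omega
      calc (F.card : ℝ) ≤ (rep C s : ℝ) := by exact_mod_cast hchain
        _ ≤ x := hC s
  calc (rep A n : ℝ)
      = ∑ t ∈ T, ((((A ×ˢ A).filter (fun q => q.1 + q.2 = n)).filter
        (fun q => (q.1 % M, q.2 % M) = t)).card : ℝ) := by rw [hrep]; push_cast; ring
    _ ≤ ∑ t ∈ T, x := Finset.sum_le_sum fib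
    _ = (T.card : ℝ) * x := by rw [Finset.sum_const]; simp [mul_comm]
    _ ≤ (K : ℝ) * x := by
        apply mul_le_mul_of_nonneg_right _ hx
        exact_mod_cast hcycB n





variable (p : ℕ) [Fact p.Prime]

/-- nonzero squares in `ZMod p` -/
noncomputable def qrF : Finset (ZMod p) :=
  Finset.univ.filter (fun x => x ≠ 0 ∧ IsSquare x)

section odd
variable (hp3 : p % 4 = 3)
include hp3

lemma p_odd : p ≠ 2 := by omega

lemma ringChar_ne_two : ringChar (ZMod p) ≠ 2 := by
  rw [ZMod.ringChar_zmod_n]; omega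

lemma chi_neg_one : quadraticChar (ZMod p) (-1) = -1 := by
  rw [quadraticChar_neg_one_iff_not_isSquare]
  rw [FiniteField.isSquare_neg_one_iff]
  rw [ZMod.card]
  omega

lemma one_add_chi_nonneg (x : ZMod p) : (0:ℤ) ≤ 1 + quadraticChar (ZMod p) x := by
  rcases eq_or_ne x 0 with h | h
  · simp [h]
  · rcases quadraticChar_dichotomy (F := ZMod p) h with h' | h' <;> rw [h'] <;> norm_num

lemma sum_chi_shift (t : ZMod p) :
    ∑ x : ZMod p, quadraticChar (ZMod p) (t - x) = 0 := by
  exact (Finset.sum_equiv (Equiv.subLeft t) (by simp) (fun x _ => rfl)).trans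
    (quadraticChar_sum_zero (ringChar_ne_two p hp3))

lemma sum_chi_cross {t : ZMod p} (ht : t ≠ 0) :
    ∑ x : ZMod p, quadraticChar (ZMod p) (x * (t - x)) = 1 := by
  classical
  set χ := quadraticChar (ZMod p) with hχ
  have h0 : (fun x : ZMod p => χ (x * (t - x))) 0 = 0 := by rw [hχ]; simp
  rw [← Finset.sum_erase (f := fun x : ZMod p => χ (x * (t - x))) Finset.univ h0]
  have step1 : ∀ x ∈ Finset.univ.erase (0 : ZMod p),
      χ (x * (t - x)) = χ (t * x⁻¹ - 1) := by
    intro x hx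
    have hx0 : x ≠ 0 := Finset.ne_of_mem_erase hx
    have : x * (t - x) = x^2 * (t * x⁻¹ - 1) := by
      field_simp
    rw [this, map_mul, quadraticChar_sq_one' hx0, one_mul]
  rw [Finset.sum_congr rfl step1]
  -- reindex x ↦ x⁻¹
  have step2 : ∑ x ∈ Finset.univ.erase (0:ZMod p), χ (t * x⁻¹ - 1)
      = ∑ u ∈ Finset.univ.erase (0:ZMod p), χ (t * u - 1) := by
    apply Finset.sum_nbij' (fun x => x⁻¹) (fun x => x⁻¹)
    · intro a ha
      simp only [Finset.mem_erase, Finset.mem_univ, and_true] at ha ⊢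
      exact inv_ne_zero ha
    · intro a ha
      simp only [Finset.mem_erase, Finset.mem_univ, and_true] at ha ⊢
      exact inv_ne_zero ha
    · intro a _; exact inv_inv a
    · intro a _; exact inv_inv a
    · intro a _; rfl
  rw [step2]
  -- reindex u ↦ t*u - 1, image is univ.erase (-1)
  have hinj : Set.InjOn (fun u : ZMod p => t * u - 1) (Finset.univ.erase (0:ZMod p)) := by
    intro a _ b _ hab
    simp only at hab
    have : t * a = t * b := by linear_combination hab
    exact mul_left_cancel₀ ht this
  have himg : (Finset.univ.erase (0:ZMod p)).image (fun u => t * u - 1)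
      = Finset.univ.erase (-1 : ZMod p) := by
    ext w
    simp only [Finset.mem_image, Finset.mem_erase, Finset.mem_univ, and_true]
    constructor
    · rintro ⟨u, hu, rfl⟩
      intro hw
      apply hu
      have : t * u = 0 := by linear_combination hw
      rcases mul_eq_zero.1 this with h | h
      · exact absurd h ht
      · exact h
    · intro hw
      refine ⟨(w + 1) * t⁻¹, ?_, ?_⟩
      · intro h
        rcases mul_eq_zero.1 h with h | h
        · exact hw (by linear_combination h)
        · exact absurd h (inv_ne_zero ht)
      · field_simp; ring
  have := Finset.sum_image (f := χ) (g := fun u : ZMod p => t * u - 1)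
    (s := Finset.univ.erase (0:ZMod p)) (fun a ha b hb hab => hinj ha hb hab)
  rw [← this, himg]
  rw [Finset.sum_erase_eq_sub (Finset.mem_univ (-1 : ZMod p))]
  rw [quadraticChar_sum_zero (ringChar_ne_two p hp3), chi_neg_one p hp3]
  ring

/-- The central character-sum estimate. -/
lemma qr_flat (t : ZMod p) :
    4 * ((Finset.univ.filter (fun x : ZMod p => x ∈ qrF p ∧ (t - x) ∈ qrF p)).card : ℤ)
      ≤ (p : ℤ) + 1 := by
  classical
  set χ := quadraticChar (ZMod p) with hχ
  rcases eq_or_ne t 0 with rfl | ht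
  · -- empty filter
    have : (Finset.univ.filter (fun x : ZMod p => x ∈ qrF p ∧ ((0:ZMod p) - x) ∈ qrF p)) = ∅ := by
      rw [Finset.eq_empty_iff_forall_notMem]
      intro x hx
      simp only [Finset.mem_filter, Finset.mem_univ, true_and, qrF] at hx
      obtain ⟨⟨hx0, hxsq⟩, hnx0, hnxsq⟩ := hx
      have h1 : IsSquare (x⁻¹) := by
        obtain ⟨r, hr⟩ := hxsq
        exact ⟨r⁻¹, by rw [hr]; rw [mul_inv]⟩
      have h2 : IsSquare ((0 - x) * x⁻¹) := hnxsq.mul h1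
      have h3 : ((0:ZMod p) - x) * x⁻¹ = -1 := by
        field_simp; ring
      rw [h3] at h2
      rw [FiniteField.isSquare_neg_one_iff, ZMod.card] at h2
      omega
    rw [this]
    simp
    have : (3:ℤ) ≤ (p:ℤ) := by exact_mod_cast (by omega : 3 ≤ p)
    omega
  · have expand : ∑ x : ZMod p, (1 + χ x) * (1 + χ (t - x)) = (p:ℤ) + 1 := by
      have : ∀ x : ZMod p, (1 + χ x) * (1 + χ (t - x))
          = 1 + χ x + χ (t - x) + χ x * χ (t - x) := fun x => by ring
      rw [Finset.sum_congr rfl (fun x _ => this x)]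
      rw [Finset.sum_add_distrib, Finset.sum_add_distrib, Finset.sum_add_distrib]
      have hcard : ∑ _x : ZMod p, (1:ℤ) = (p:ℤ) := by
        rw [Finset.sum_const]; simp [ZMod.card]
      have hcross : ∑ x : ZMod p, χ x * χ (t - x) = 1 := by
        have : ∀ x : ZMod p, χ x * χ (t - x) = χ (x * (t - x)) := fun x => (map_mul χ _ _).symm
        rw [Finset.sum_congr rfl (fun x _ => this x)]
        exact sum_chi_cross p hp3 ht
      rw [hcard, quadraticChar_sum_zero (ringChar_ne_two p hp3), sum_chi_shift p hp3 t, hcross]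
      ring
    rw [← expand]
    have hsub : Finset.univ.filter (fun x : ZMod p => x ∈ qrF p ∧ (t - x) ∈ qrF p)
        ⊆ Finset.univ := Finset.filter_subset _ _
    calc 4 * ((Finset.univ.filter (fun x : ZMod p => x ∈ qrF p ∧ (t - x) ∈ qrF p)).card : ℤ)
        = ∑ x ∈ Finset.univ.filter (fun x : ZMod p => x ∈ qrF p ∧ (t - x) ∈ qrF p),
            (1 + χ x) * (1 + χ (t - x)) := by
          have hterm : ∀ x ∈ Finset.univ.filter
              (fun x : ZMod p => x ∈ qrF p ∧ (t - x) ∈ qrF p),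
              (1 + χ x) * (1 + χ (t - x)) = 4 := by
            intro x hx
            simp only [Finset.mem_filter, Finset.mem_univ, true_and, qrF] at hx
            obtain ⟨⟨hx0, hxsq⟩, hnx0, hnxsq⟩ := hx
            rw [hχ, (quadraticChar_one_iff_isSquare hx0).2 hxsq,
              (quadraticChar_one_iff_isSquare hnx0).2 hnxsq]
            norm_num
          rw [Finset.sum_congr rfl hterm, Finset.sum_const, nsmul_eq_mul]
          ring
      _ ≤ ∑ x : ZMod p, (1 + χ x) * (1 + χ (t - x)) := by
          apply Finset.sum_le_sum_of_subset_of_nonneg hsub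
          intro x _ _
          exact mul_nonneg (one_add_chi_nonneg p hp3 x) (one_add_chi_nonneg p hp3 (t - x))

end odd

noncomputable def qrImg : Finset ℕ := (qrF p).image ZMod.val

section odd2
variable (hp3 : p % 4 = 3)
include hp3

instance : NeZero p := ⟨(Fact.out : p.Prime).ne_zero⟩

lemma qrImg_lt : ∀ a ∈ qrImg p, a < p := by
  intro a ha
  simp only [qrImg, Finset.mem_image] at ha
  obtain ⟨x, _, rfl⟩ := ha
  exact ZMod.val_lt x

lemma qrImg_nonempty : (qrImg p).Nonempty := by
  refine ⟨(1 : ZMod p).val, ?_⟩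
  simp only [qrImg, Finset.mem_image]
  exact ⟨1, by simp [qrF, Finset.mem_filter], rfl⟩

/-- `2 * |QR| = p - 1` -/
lemma card_qrF : 2 * (qrF p).card = p - 1 := by
  classical
  have hchar2 : (2 : ZMod p) ≠ 0 := by
    have h2 : ((2:ℕ) : ZMod p) ≠ 0 := by
      rw [Ne, ZMod.natCast_eq_zero_iff]
      intro h
      have := Nat.le_of_dvd (by norm_num) h
      omega
    simpa using h2
  set U : Finset (ZMod p) := Finset.univ.erase 0 with hU
  have hUcard : U.card = p - 1 := by
    rw [hU, Finset.card_erase_of_mem (Finset.mem_univ _), Finset.card_univ, ZMod.card]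
  have key : ∀ u ∈ U, u * u ∈ qrF p := by
    intro u hu
    have hu0 : u ≠ 0 := Finset.ne_of_mem_erase hu
    simp only [qrF, Finset.mem_filter, Finset.mem_univ, true_and]
    exact ⟨mul_ne_zero hu0 hu0, ⟨u, rfl⟩⟩
  have main : U.card = ∑ y ∈ qrF p, (U.filter (fun u => u * u = y)).card :=
    Finset.card_eq_sum_card_fiberwise key
  have fib : ∀ y ∈ qrF p, (U.filter (fun u => u * u = y)).card = 2 := by
    intro y hy
    simp only [qrF, Finset.mem_filter, Finset.mem_univ, true_and] at hy
    obtain ⟨hy0, v, hv⟩ := hy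
    have hv0 : v ≠ 0 := by rintro rfl; rw [mul_zero] at hv; exact hy0 hv
    have hvneg : v ≠ -v := by
      intro h
      have h2v : (2 : ZMod p) * v = 0 := by linear_combination h
      rcases mul_eq_zero.1 h2v with h2 | h2
      exacts [hchar2 h2, hv0 h2]
    have hset : U.filter (fun u => u * u = y) = {v, -v} := by
      ext u
      simp only [hU, Finset.mem_filter, Finset.mem_erase, Finset.mem_univ, true_and,
        Finset.mem_insert, Finset.mem_singleton, and_true]
      constructor
      · rintro ⟨hu0, huu⟩
        have hz : (u - v) * (u + v) = 0 := by rw [hv] at huu; linear_combination huu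
        rcases mul_eq_zero.1 hz with h | h
        · left; exact sub_eq_zero.1 h
        · right; exact eq_neg_of_add_eq_zero_left h
      · rintro (rfl | rfl)
        · exact ⟨hv0, hv.symm⟩
        · exact ⟨neg_ne_zero.2 hv0, by rw [hv]; ring⟩
    rw [hset, Finset.card_insert_of_notMem (by simpa using hvneg), Finset.card_singleton]
  rw [← hUcard, main, Finset.sum_congr rfl fib, Finset.sum_const, smul_eq_mul, mul_comm]

/-- flatness of the QR set at the `ℕ` level -/
lemma cyc_qrImg_le (r : ℕ) : 4 * cyc p (qrImg p) r ≤ p + 1 := by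
  classical
  set t : ZMod p := (r : ZMod p) with hT
  have hinj : ∀ q ∈ ((qrImg p ×ˢ qrImg p).filter fun q => (q.1 + q.2) % p = r % p),
      ((q.1 : ZMod p) ∈ Finset.univ.filter
        (fun x : ZMod p => x ∈ qrF p ∧ (t - x) ∈ qrF p)) := by
    rintro ⟨a, b⟩ hq
    simp only [Finset.mem_filter, Finset.mem_product] at hq
    obtain ⟨⟨ha, hb⟩, hmod⟩ := hq
    have hmem : ∀ c ∈ qrImg p, ((c:ℕ) : ZMod p) ∈ qrF p := by
      intro c hc
      simp only [qrImg, Finset.mem_image] at hc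
      obtain ⟨x, hx, rfl⟩ := hc
      rwa [ZMod.natCast_val, ZMod.cast_id]
    have hsum : ((a : ZMod p) + (b : ZMod p)) = t := by
      rw [hT, ← Nat.cast_add]
      exact (ZMod.natCast_eq_natCast_iff _ _ _).2 hmod
    simp only [Finset.mem_filter, Finset.mem_univ, true_and]
    refine ⟨hmem a ha, ?_⟩
    have : t - (a : ZMod p) = (b : ZMod p) := by rw [← hsum]; ring
    rw [this]
    exact hmem b hb
  have hcard : cyc p (qrImg p) r ≤ (Finset.univ.filter
      (fun x : ZMod p => x ∈ qrF p ∧ (t - x) ∈ qrF p)).card := by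
    rw [cyc]
    apply Finset.card_le_card_of_injOn (fun q => ((q.1 : ℕ) : ZMod p)) (fun q hq => hinj q hq)
    rintro ⟨a, b⟩ hq ⟨a', b'⟩ hq' heq
    simp only [Finset.mem_coe, Finset.mem_filter, Finset.mem_product] at hq hq'
    simp only at heq
    have ha : a < p := qrImg_lt p hp3 a hq.1.1
    have ha' : a' < p := qrImg_lt p hp3 a' hq'.1.1
    have hb : b < p := qrImg_lt p hp3 b hq.1.2
    have hb' : b' < p := qrImg_lt p hp3 b' hq'.1.2
    have haa : a = a' := by
      have := congrArg ZMod.val heq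
      rwa [ZMod.val_cast_of_lt ha, ZMod.val_cast_of_lt ha'] at this
    have hbb : b = b' := by
      -- b ≡ r - a, b' ≡ r - a' mod p, both < p
      have h1 : (a + b) % p = (a' + b') % p := by rw [hq.2, hq'.2]
      rw [haa] at h1
      have : b % p = b' % p := by
        have h2 : (a' + b) % p = (a' + b') % p := h1
        have := Nat.ModEq.add_left_cancel' a' h2
        exact this
      rwa [Nat.mod_eq_of_lt hb, Nat.mod_eq_of_lt hb'] at this
    simp [haa, hbb]
  have := qr_flat p hp3 t
  have h4 : 4 * (cyc p (qrImg p) r : ℤ) ≤ (p:ℤ) + 1 := by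
    calc 4 * (cyc p (qrImg p) r : ℤ)
        ≤ 4 * ((Finset.univ.filter
          (fun x : ZMod p => x ∈ qrF p ∧ (t - x) ∈ qrF p)).card : ℤ) := by
          have : (cyc p (qrImg p) r : ℤ) ≤ _ := Int.ofNat_le.2 hcard
          linarith
      _ ≤ (p:ℤ) + 1 := this
  exact_mod_cast h4

end odd2


def qrN (p : ℕ) : Finset ℕ :=
  (Finset.range p).filter (fun a => a ≠ 0 ∧ ∃ b ∈ Finset.range p, b * b % p = a)

lemma qrN_eq_image (p : ℕ) [Fact p.Prime] : qrN p = qrImg p := by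
  classical
  haveI : NeZero p := ⟨(Fact.out : p.Prime).ne_zero⟩
  have hp1 : 1 < p := (Fact.out : p.Prime).one_lt
  ext a
  simp only [qrN, qrImg, qrF, Finset.mem_filter, Finset.mem_range, Finset.mem_image,
    Finset.mem_univ, true_and]
  constructor
  · rintro ⟨hap, ha0, b, hbp, hba⟩
    refine ⟨(a : ZMod p), ⟨?_, ?_⟩, ZMod.val_cast_of_lt hap⟩
    · intro h
      rw [ZMod.natCast_eq_zero_iff] at h
      have := Nat.le_of_dvd (by omega) h
      omega
    · refine ⟨(b : ZMod p), ?_⟩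
      have : ((b * b % p : ℕ) : ZMod p) = ((b * b : ℕ) : ZMod p) := ZMod.natCast_mod _ _
      rw [← hba, this]
      push_cast
      ring
  · rintro ⟨x, ⟨hx0, r, hr⟩, rfl⟩
    refine ⟨ZMod.val_lt x, ?_, ?_⟩
    · rw [Ne, ZMod.val_eq_zero]; exact hx0
    · refine ⟨r.val, ZMod.val_lt r, ?_⟩
      rw [← ZMod.val_mul, ← hr]

lemma two_mul_card_qrN {p : ℕ} (hp : p.Prime) (hp3 : p % 4 = 3) :
    2 * (qrN p).card = p - 1 := by
  haveI : Fact p.Prime := ⟨hp⟩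
  haveI : NeZero p := ⟨hp.ne_zero⟩
  rw [qrN_eq_image p, qrImg, Finset.card_image_of_injective _ (ZMod.val_injective p)]
  exact card_qrF p hp3

lemma cyc_qrN_le {p : ℕ} (hp : p.Prime) (hp3 : p % 4 = 3) (r : ℕ) :
    4 * cyc p (qrN p) r ≤ p + 1 := by
  haveI : Fact p.Prime := ⟨hp⟩
  haveI : NeZero p := ⟨hp.ne_zero⟩
  rw [qrN_eq_image p]
  exact cyc_qrImg_le p hp3 r



lemma qrN_lt' {p : ℕ} : ∀ a ∈ qrN p, a < p := by
  intro a ha; simp only [qrN, Finset.mem_filter, Finset.mem_range] at ha; exact ha.1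

lemma qrN_nonempty' {p : ℕ} (hp : 2 ≤ p) : (qrN p).Nonempty := by
  refine ⟨1, ?_⟩
  simp only [qrN, Finset.mem_filter, Finset.mem_range]
  refine ⟨by omega, by omega, ?_⟩
  refine ⟨1, by omega, ?_⟩
  simpa using Nat.mod_eq_of_lt (by omega : 1 < p)

/-- Dirichlet: arbitrarily large primes `≡ 3 (mod 4)`. -/
lemma exists_prime_three_mod_four (m : ℕ) : ∃ q, m < q ∧ q.Prime ∧ q % 4 = 3 := by
  have hu : IsUnit (3 : ZMod 4) := by decide
  obtain ⟨q, hq1, hq2, hq3⟩ := Nat.forall_exists_prime_gt_and_eq_mod hu m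
  refine ⟨q, hq1, hq2, ?_⟩
  have := congrArg ZMod.val hq3
  rwa [ZMod.val_natCast] at this

section build
variable (P : ℕ → ℕ)

def ModP (k : ℕ) : ℕ := ∏ j ∈ Finset.range k, P j

noncomputable def Bset : ℕ → Finset ℕ
  | 0 => {0}
  | k+1 => comp (Bset k) (ModP P k) (qrN (P k))

variable (hP : ∀ j, (P j).Prime ∧ P j % 4 = 3 ∧ 7 ≤ P j)
include hP

lemma ModP_pos (k : ℕ) : 0 < ModP P k :=
  Finset.prod_pos fun j _ => (hP j).1.pos

lemma Bset_range (k : ℕ) : ∀ b ∈ Bset P k, b < ModP P k := by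
  induction k with
  | zero => intro b hb; simp [Bset] at hb; simp [hb, ModP]
  | succ k ih =>
    have : ModP P (k+1) = ModP P k * P k := by
      rw [ModP, ModP, Finset.prod_range_succ]
    rw [this]
    exact comp_subset_range ih qrN_lt'
 
lemma Bset_nonempty (k : ℕ) : (Bset P k).Nonempty := by
  induction k with
  | zero => exact ⟨0, by simp [Bset]⟩
  | succ k ih =>
    obtain ⟨b, hb⟩ := ih
    have h2 : 2 ≤ P k := le_trans (by norm_num) (hP k).2.2
    obtain ⟨c, hc⟩ := qrN_nonempty' h2
    exact ⟨b + ModP P k * c, mem_comp.2 ⟨b, hb, c, hc, rfl⟩⟩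

lemma Bset_card (k : ℕ) : (Bset P k).card = ∏ j ∈ Finset.range k, (P j - 1) / 2 := by
  induction k with
  | zero => simp [Bset]
  | succ k ih =>
    rw [Bset, card_comp (Bset_range P hP k), ih, Finset.prod_range_succ]
    congr 1
    have h2 := two_mul_card_qrN (hP k).1 (hP k).2.1
    omega

lemma Bset_cyc (k : ℕ) :
    ∀ r, cyc (ModP P k) (Bset P k) r ≤ ∏ j ∈ Finset.range k, (P j + 1) / 4 := by
  induction k with
  | zero =>
    intro r
    simp only [Finset.range_zero, Finset.prod_empty]
    have h := Finset.card_filter_le ((({0} : Finset ℕ)) ×ˢ ({0} : Finset ℕ))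
      (fun q => (q.1 + q.2) % (ModP P 0) = r % (ModP P 0))
    simpa [cyc, Bset] using h
  | succ k ih =>
    have hmod : ModP P (k+1) = ModP P k * P k := by
      rw [ModP, ModP, Finset.prod_range_succ]
    have hqr : ∀ s, cyc (P k) (qrN (P k)) s ≤ (P k + 1) / 4 := by
      intro s
      rw [Nat.le_div_iff_mul_le (by norm_num)]
      have := cyc_qrN_le (hP k).1 (hP k).2.1 s
      omega
    intro r
    rw [hmod, Finset.prod_range_succ, Bset]
    exact cyc_comp_le (Bset_range P hP k) (ModP_pos P hP k) ih hqr r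

lemma Bset_card_le (k : ℕ) : ∀ b ∈ Bset P k, b < ModP P k := Bset_range P hP k

/-- density bound: `|B_k| / M_k ≤ (1/2)^k` in `ℝ` -/
lemma Bset_density (k : ℕ) :
    ((Bset P k).card : ℝ) ≤ (1/2)^k * (ModP P k : ℝ) := by
  rw [Bset_card P hP k, ModP, Nat.cast_prod]
  have step : ∀ j ∈ Finset.range k, (((P j - 1) / 2 : ℕ) : ℝ) ≤ (1/2) * (P j : ℝ) := by
    intro j _
    calc (((P j - 1) / 2 : ℕ) : ℝ) ≤ ((P j - 1 : ℕ) : ℝ) / 2 := Nat.cast_div_le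
    _ ≤ (P j : ℝ) / 2 := by
        apply div_le_div_of_nonneg_right _ (by norm_num)
        exact_mod_cast Nat.sub_le _ _
    _ = (1/2) * (P j : ℝ) := by ring
  calc (∏ j ∈ Finset.range k, (((P j - 1) / 2 : ℕ) : ℝ))
      ≤ ∏ j ∈ Finset.range k, ((1/2) * (P j : ℝ)) := by
        apply Finset.prod_le_prod (fun j _ => by positivity) step
    _ = (1/2)^k * ((∏ j ∈ Finset.range k, (P j : ℕ) : ℕ) : ℝ) := by
        rw [Finset.prod_mul_distrib, Finset.prod_const, Finset.card_range]
        push_cast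
        ring

end build




/-- `∏ (1+a_j) ≤ 1 + 2 ∑ a_j` when `∑ a_j ≤ 1/2`. -/
lemma prod_one_add_le (a : ℕ → ℝ) (ha : ∀ j, 0 ≤ a j) :
    ∀ k, (∑ j ∈ Finset.range k, a j ≤ 1/2) →
      ∏ j ∈ Finset.range k, (1 + a j) ≤ 1 + 2 * ∑ j ∈ Finset.range k, a j := by
  intro k
  induction k with
  | zero => simp
  | succ k ih =>
    intro hs
    rw [Finset.prod_range_succ, Finset.sum_range_succ]
    have hsk : ∑ j ∈ Finset.range k, a j ≤ 1/2 := by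
      have := Finset.sum_range_succ a k
      have hk := ha k
      linarith [hs, this]
    have h1 := ih hsk
    have h2 : (0:ℝ) ≤ ∑ j ∈ Finset.range k, a j :=
      Finset.sum_nonneg fun j _ => ha j
    have h3 := ha k
    nlinarith [h1, h2, h3, hsk]

lemma geom_half_le_two (k : ℕ) : ∑ j ∈ Finset.range k, ((1:ℝ)/2)^j ≤ 2 := by
  induction k with
  | zero => norm_num
  | succ k ih =>
    rw [Finset.sum_range_succ]
    have key : ∀ m, ∑ j ∈ Finset.range m, ((1:ℝ)/2)^j = 2 - 2 * (1/2)^m := by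
      intro m
      induction m with
      | zero => norm_num
      | succ m ihm => rw [Finset.sum_range_succ, ihm]; ring
    have h0 : (0:ℝ) < (1/2)^k := by positivity
    rw [key k]
    nlinarith [h0]

/-- per-prime inequality -/
lemma per_prime {P : ℕ} (hP7 : 7 ≤ P) (hP3 : P % 4 = 3) :
    (((P + 1) / 4 : ℕ) : ℝ) * P ≤ (1 + 4 / (P : ℝ)) * (((P - 1) / 2 : ℕ) : ℝ)^2 := by
  have hκ : 4 * ((P + 1) / 4) = P + 1 := by omega
  have hβ : 2 * ((P - 1) / 2) = P - 1 := by omega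
  have hκR : 4 * (((P + 1) / 4 : ℕ) : ℝ) = (P : ℝ) + 1 := by exact_mod_cast hκ
  have hβR : 2 * (((P - 1) / 2 : ℕ) : ℝ) = (P : ℝ) - 1 := by
    have h1 : ((P - 1 : ℕ) : ℝ) = (P : ℝ) - 1 := by
      have : 1 ≤ P := by omega
      push_cast [Nat.cast_sub this]
      ring
    rw [← h1]; exact_mod_cast hβ
  have hPpos : (0:ℝ) < P := by positivity
  set κ : ℝ := (((P + 1) / 4 : ℕ) : ℝ)
  set β : ℝ := (((P - 1) / 2 : ℕ) : ℝ)
  have hform : (1 + 4 / (P:ℝ)) = ((P:ℝ) + 4) / P := by field_simp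
  rw [hform, div_mul_eq_mul_div, le_div_iff₀ hPpos]
  -- goal : κ * P * P ≤ (P+4) * β^2 * ... careful
  have e1 : 16 * (κ * (P:ℝ) * P) = 4 * ((P:ℝ)+1) * P * P := by
    linear_combination (4 * (P:ℝ) * P) * hκR
  have e2 : 16 * (((P:ℝ)+4) * β^2) = 4 * ((P:ℝ)+4) * ((P:ℝ)-1)^2 := by
    linear_combination (4 * ((P:ℝ)+4) * (2*β + ((P:ℝ)-1))) * hβR
  have hP7R : (7:ℝ) ≤ P := by exact_mod_cast hP7
  nlinarith [e1, e2, mul_nonneg (sub_nonneg.2 hP7R) hPpos.le]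

/-- coefficients of a polynomial are bounded above -/
lemma bddAbove_coeff (f : Polynomial ℝ) : BddAbove (Set.range fun k => f.coeff k) := by
  classical
  apply Set.Finite.bddAbove
  have : Set.range (fun k => f.coeff k) ⊆ insert 0 ((f.support.image f.coeff : Finset ℝ) : Set ℝ) := by
    rintro y ⟨k, rfl⟩
    by_cases h : k ∈ f.support
    · apply Set.mem_insert_of_mem
      simp only [Finset.coe_image, Set.mem_image, Finset.mem_coe]
      exact ⟨k, h, rfl⟩
    · have : f.coeff k = 0 := Polynomial.notMem_support_iff.1 h
      simp only [this]
      exact Set.mem_insert _ _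
  exact Set.Finite.subset (Set.Finite.insert _ (Finset.finite_toSet _)) this


/-- K_k · M_k ≤ E · |B_k|² -/
lemma K_mul_M_le (P : ℕ → ℕ) (hP : ∀ j, (P j).Prime ∧ P j % 4 = 3 ∧ 7 ≤ P j)
    (k : ℕ) (E : ℝ) (hE : ∏ j ∈ Finset.range k, (1 + 4/(P j : ℝ)) ≤ E) :
    ((∏ j ∈ Finset.range k, (P j + 1) / 4 : ℕ) : ℝ) * (ModP P k : ℝ)
      ≤ E * ((Bset P k).card : ℝ)^2 := by
  rw [Bset_card P hP k, ModP, Nat.cast_prod, Nat.cast_prod, Nat.cast_prod]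
  calc (∏ j ∈ Finset.range k, (((P j + 1) / 4 : ℕ) : ℝ))
        * (∏ j ∈ Finset.range k, ((P j : ℕ) : ℝ))
      = ∏ j ∈ Finset.range k, ((((P j + 1) / 4 : ℕ) : ℝ) * (P j : ℝ)) := by
        rw [Finset.prod_mul_distrib]
    _ ≤ ∏ j ∈ Finset.range k, ((1 + 4/(P j : ℝ)) * (((P j - 1) / 2 : ℕ) : ℝ)^2) := by
        apply Finset.prod_le_prod
        · intro j _; positivity
        · intro j _; exact per_prime (hP j).2.2 (hP j).2.1
    _ = (∏ j ∈ Finset.range k, (1 + 4/(P j : ℝ)))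
        * (∏ j ∈ Finset.range k, (((P j - 1) / 2 : ℕ) : ℝ))^2 := by
        rw [Finset.prod_mul_distrib, ← Finset.prod_pow]
    _ ≤ E * (∏ j ∈ Finset.range k, (((P j - 1) / 2 : ℕ) : ℝ))^2 := by
        apply mul_le_mul_of_nonneg_right hE (by positivity)

end NmAux
end

open NmAux in
/-- Main theorem: from a dense sequence of Newman polynomials with `R(p_n) ≤ ρ / deg p_n`,
one constructs, for every `ρ' > ρ`, a sparse sequence of Newman polynomials `q_n` with
`R(q_n) ≤ ρ' / deg q_n`. -/
theorem stmt12 (p : ℕ → Polynomial ℝ) (hNew : ∀ n, IsNewman (p n))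
    (hdeg : Tendsto (fun n => (p n).natDegree) atTop atTop)
    (c₀ ρ : ℝ) (hc₀ : 0 < c₀) (hρ : 0 < ρ)
    (hdense : ∀ n, c₀ * (p n).natDegree ≤ coeffSum (p n))
    (hR : ∀ n, Rquot (p n) ≤ ρ / (p n).natDegree) :
    ∀ ρ' : ℝ, ρ < ρ' →
      ∃ q : ℕ → Polynomial ℝ, (∀ n, IsNewman (q n)) ∧
        Tendsto (fun n => (q n).natDegree) atTop atTop ∧
        Tendsto (fun n => coeffSum (q n) / (q n).natDegree) atTop (nhds 0) ∧
        ∀ n, Rquot (q n) ≤ ρ' / (q n).natDegree := by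
  intro ρ' hρρ'
  -- numeric setup
  set δ : ℝ := ρ' - ρ with hδ
  have hδpos : 0 < δ := by simp [hδ]; linarith
  set ε : ℝ := min 1 (δ / ρ) with hε
  have hεpos : 0 < ε := lt_min one_pos (div_pos hδpos hρ)
  have hε1 : ε ≤ 1 := min_le_left _ _
  have hεδ : ρ * ε ≤ δ := by
    have h1 : ε ≤ δ / ρ := min_le_right _ _
    calc ρ * ε ≤ ρ * (δ / ρ) := mul_le_mul_of_nonneg_left h1 hρ.le
      _ = δ := by field_simp
  -- the prime sequence
  set c : ℕ := ⌈(32:ℝ)/ε⌉₊ with hc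
  have hPex : ∀ j : ℕ, ∃ q, 2^j * (c+1) + 7 < q ∧ q.Prime ∧ q % 4 = 3 := fun j =>
    exists_prime_three_mod_four _
  choose P hPgt hPprime hPmod using hPex
  have hP : ∀ j, (P j).Prime ∧ P j % 4 = 3 ∧ 7 ≤ P j := fun j =>
    ⟨hPprime j, hPmod j, by have := hPgt j; omega⟩
  have hPposR : ∀ j, (0:ℝ) < P j := fun j => by
    have : (7:ℝ) ≤ P j := by exact_mod_cast (hP j).2.2
    linarith
  have hPbigR : ∀ j, (4:ℝ) / P j ≤ ε/8 * (1/2)^j := by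
    intro j
    have h1 : ((2^j * (c+1) : ℕ) : ℝ) ≤ P j := by
      exact_mod_cast le_of_lt (by have := hPgt j; omega : 2^j*(c+1) < P j)
    have h2 : (32:ℝ)/ε ≤ ((c+1 : ℕ) : ℝ) := by
      calc (32:ℝ)/ε ≤ (c : ℕ) := Nat.le_ceil _
        _ ≤ ((c+1 : ℕ) : ℝ) := by exact_mod_cast Nat.le_succ c
    have h3 : (2:ℝ)^j * (32/ε) ≤ P j := by
      calc (2:ℝ)^j * (32/ε) ≤ (2:ℝ)^j * ((c+1:ℕ):ℝ) := by
            apply mul_le_mul_of_nonneg_left h2 (by positivity)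
        _ = ((2^j * (c+1) : ℕ) : ℝ) := by push_cast; ring
        _ ≤ P j := h1
    rw [div_le_iff₀ (hPposR j)]
    have h4 : (ε/8 * (1/2)^j) * ((2:ℝ)^j * (32/ε)) = 4 := by
      have h2j : ((2:ℝ)^j) * (1/2)^j = 1 := by
        rw [← mul_pow]; norm_num
      field_simp
      nlinarith [h2j, hεpos]
    calc (4:ℝ) = (ε/8 * (1/2)^j) * ((2:ℝ)^j * (32/ε)) := h4.symm
      _ ≤ (ε/8 * (1/2)^j) * P j := by
          apply mul_le_mul_of_nonneg_left h3 (by positivity)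
  have hprod : ∀ k, ∏ j ∈ Finset.range k, (1 + 4/(P j : ℝ)) ≤ 1 + ε/2 := by
    intro k
    have hsum : ∑ j ∈ Finset.range k, (4:ℝ)/(P j) ≤ ε/4 := by
      calc ∑ j ∈ Finset.range k, (4:ℝ)/(P j)
          ≤ ∑ j ∈ Finset.range k, (ε/8 * (1/2)^j) := by
            exact Finset.sum_le_sum fun j _ => hPbigR j
        _ = ε/8 * ∑ j ∈ Finset.range k, ((1:ℝ)/2)^j := by rw [Finset.mul_sum]
        _ ≤ ε/8 * 2 := by
            apply mul_le_mul_of_nonneg_left (geom_half_le_two k) (by positivity)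
        _ = ε/4 := by ring
    have h12 : ∑ j ∈ Finset.range k, (4:ℝ)/(P j) ≤ 1/2 := by linarith
    have := prod_one_add_le (fun j => 4/(P j : ℝ)) (fun j => by positivity) k h12
    calc ∏ j ∈ Finset.range k, (1 + 4/(P j : ℝ))
        ≤ 1 + 2 * ∑ j ∈ Finset.range k, (4:ℝ)/(P j) := this
      _ ≤ 1 + 2 * (ε/4) := by linarith
      _ = 1 + ε/2 := by ring
  -- the base polynomial
  obtain ⟨m, hm⟩ := (hdeg.eventually_ge_atTop (max 1 ⌈(4:ℝ)/ε⌉₊)).exists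
  set d : ℕ := (p m).natDegree with hd
  have hd1 : 1 ≤ d := le_trans (le_max_left _ _) hm
  have hdR : (0:ℝ) < d := by exact_mod_cast Nat.lt_of_lt_of_le Nat.zero_lt_one hd1
  have hd4 : (4:ℝ)/ε ≤ d := by
    calc (4:ℝ)/ε ≤ (⌈(4:ℝ)/ε⌉₊ : ℕ) := Nat.le_ceil _
      _ ≤ (d : ℝ) := by exact_mod_cast le_trans (le_max_right _ _) hm
  set D : Finset ℕ := (p m).support with hD
  have hpm0 : p m ≠ 0 := fun h => by simp [hd, h] at hd1
  have hDne : D.Nonempty := Polynomial.nonempty_support_iff.2 hpm0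
  have hDpol : p m = pol D := by
    apply Polynomial.ext
    intro k
    rw [coeff_pol]
    rcases hNew m k with h | h
    · rw [h, if_neg]
      rw [hD, Polynomial.mem_support_iff]
      simp [h]
    · rw [h, if_pos]
      rw [hD, Polynomial.mem_support_iff, h]
      norm_num
  have hmaxD : D.max' hDne = d := by
    have h1 := natDegree_pol hDne
    rw [← hDpol] at h1
    rw [hd]
    exact h1.symm

  set L : ℕ := D.card with hL
  have hLpos : 0 < L := Finset.card_pos.2 hDne
  have hLR : (0:ℝ) < L := by exact_mod_cast hLpos
  have hcs : coeffSum (p m) = (L : ℝ) := by rw [hDpol, coeffSum_pol hDne]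
  have hLd : L ≤ d + 1 := by
    have hsub : D ⊆ Finset.range (d + 1) := by
      intro a ha
      rw [Finset.mem_range, Nat.lt_succ_iff]
      exact Polynomial.le_natDegree_of_mem_supp a ha
    calc L ≤ (Finset.range (d+1)).card := Finset.card_le_card hsub
      _ = d + 1 := Finset.card_range _
  set X : ℝ := ρ * L^2 / d with hX
  have hXnn : 0 ≤ X := div_nonneg (mul_nonneg hρ.le (sq_nonneg _)) hdR.le
  have hrepD : ∀ γ, (rep D γ : ℝ) ≤ X := by
    intro γ
    have h1 : (rep D γ : ℝ) = ((p m)^2).coeff γ := by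
      rw [hDpol, coeff_pol_sq]
    have h2 : ((p m)^2).coeff γ ≤ maxCoeff ((p m)^2) :=
      le_ciSup (bddAbove_coeff ((p m)^2)) γ
    have h3 : maxCoeff ((p m)^2) ≤ ρ/d * (L:ℝ)^2 := by
      have h4 := hR m
      rw [Rquot] at h4
      have h5 : (0:ℝ) < (coeffSum (p m))^2 := by rw [hcs]; exact pow_pos hLR 2
      have h6 := (div_le_iff₀ h5).1 h4
      calc maxCoeff ((p m)^2) ≤ ρ / (p m).natDegree * (coeffSum (p m))^2 := h6
        _ = ρ/d * (L:ℝ)^2 := by rw [hcs, ← hd]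
    rw [h1]
    calc ((p m)^2).coeff γ ≤ ρ/d * (L:ℝ)^2 := le_trans h2 h3
      _ = X := by rw [hX]; ring
  -- the construction
  have hMpos : ∀ n, 0 < ModP P n := ModP_pos P hP
  have hBr := Bset_range P hP
  have hBne := Bset_nonempty P hP
  set A : ℕ → Finset ℕ := fun n => comp (Bset P n) (ModP P n) D with hA
  have hAne : ∀ n, (A n).Nonempty := by
    intro n
    obtain ⟨b, hb⟩ := hBne n
    obtain ⟨cD, hcD⟩ := hDne
    exact ⟨b + ModP P n * cD, mem_comp.2 ⟨b, hb, cD, hcD, rfl⟩⟩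
  have hdeg_q : ∀ n, (pol (A n)).natDegree = (A n).max' (hAne n) := fun n =>
    natDegree_pol _
  have hdegup : ∀ n, (pol (A n)).natDegree < ModP P n * (d+1) := by
    intro n
    rw [hdeg_q n]
    apply comp_subset_range (hBr n) (fun cD hcD => ?_) _ ((A n).max'_mem (hAne n))
    have := D.le_max' cD hcD
    rw [hmaxD] at this
    omega
  have hdeglow : ∀ n, ModP P n * d ≤ (pol (A n)).natDegree := by
    intro n
    obtain ⟨a, haA, hle⟩ := comp_max_lower (M := ModP P n) (hBne n)
      (hmaxD ▸ D.max'_mem hDne)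
    rw [hdeg_q n]
    exact le_trans hle ((A n).le_max' a haA)
  have hdegpos : ∀ n, 0 < (pol (A n)).natDegree := fun n =>
    lt_of_lt_of_le (Nat.mul_pos (hMpos n) hd1) (hdeglow n)
  have hcsq : ∀ n, coeffSum (pol (A n)) = (((Bset P n).card * L : ℕ) : ℝ) := by
    intro n
    rw [coeffSum_pol (hAne n), hA]
    congr 1
    exact card_comp (hBr n)
  have hmax2 : ∀ n, maxCoeff (pol (A n)^2)
      ≤ ((∏ j ∈ Finset.range n, (P j + 1) / 4 : ℕ) : ℝ) * X := by
    intro n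
    apply ciSup_le
    intro k
    rw [coeff_pol_sq]
    exact rep_comp_le X (hBr n) (hMpos n) (Bset_cyc P hP n) hXnn hrepD k
  have hbpos : ∀ n, 0 < (Bset P n).card := fun n => Finset.card_pos.2 (hBne n)
  -- finish
  refine ⟨fun n => pol (A n), fun n => isNewman_pol _, ?_, ?_, ?_⟩
  · -- degrees tend to infinity
    apply tendsto_atTop_mono (fun n => ?_)
      (tendsto_pow_atTop_atTop_of_one_lt (by norm_num : 1 < 2))
    calc 2^n ≤ NmAux.ModP P n := by
          rw [NmAux.ModP]
          calc (2:ℕ)^n = ∏ _j ∈ Finset.range n, 2 := by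
                rw [Finset.prod_const, Finset.card_range]
            _ ≤ ∏ j ∈ Finset.range n, P j := Finset.prod_le_prod' fun j _ => by
                have := (hP j).2.2; omega
      _ ≤ ModP P n * d := Nat.le_mul_of_pos_right _ (by omega)
      _ ≤ (pol (A n)).natDegree := hdeglow n
  · -- density tends to zero
    have h0 : ∀ n, 0 ≤ coeffSum (pol (A n)) / ((pol (A n)).natDegree : ℝ) := by
      intro n
      apply div_nonneg _ (Nat.cast_nonneg _)
      rw [hcsq n]
      exact Nat.cast_nonneg _
    have hb : ∀ n, coeffSum (pol (A n)) / ((pol (A n)).natDegree : ℝ) ≤ 2 * (1/2)^n := by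
      intro n
      have hdegn : (0:ℝ) < ((NmAux.ModP P n * d : ℕ) : ℝ) := by
        exact_mod_cast Nat.mul_pos (hMpos n) (by omega)
      have h1 : coeffSum (pol (A n)) / ((pol (A n)).natDegree : ℝ)
          ≤ (((Bset P n).card * L : ℕ) : ℝ) / ((NmAux.ModP P n * d : ℕ) : ℝ) := by
        rw [hcsq n]
        apply div_le_div_of_nonneg_left (Nat.cast_nonneg _) hdegn
        exact_mod_cast hdeglow n
      refine h1.trans ?_
      have h2 : (((Bset P n).card * L : ℕ) : ℝ) ≤ ((1/2)^n * NmAux.ModP P n) * (2*d) := by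
        push_cast
        apply mul_le_mul (Bset_density P hP n) ?_ (Nat.cast_nonneg _) (by positivity)
        · exact_mod_cast (by omega : L ≤ 2*d)
      calc (((Bset P n).card * L : ℕ) : ℝ) / ((NmAux.ModP P n * d : ℕ) : ℝ)
          ≤ (((1/2)^n * NmAux.ModP P n) * (2*d)) / ((NmAux.ModP P n * d : ℕ) : ℝ) :=
            div_le_div_of_nonneg_right h2 hdegn.le
        _ = 2 * (1/2)^n := by
            push_cast
            have hMR : (0:ℝ) < NmAux.ModP P n := by exact_mod_cast hMpos n
            field_simp
    have hg : Tendsto (fun n : ℕ => 2 * ((1:ℝ)/2)^n) atTop (nhds 0) := by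
      have h3 : Tendsto (fun n : ℕ => ((1:ℝ)/2)^n) atTop (nhds 0) :=
        tendsto_pow_atTop_nhds_zero_of_lt_one (by norm_num) (by norm_num)
      simpa using h3.const_mul 2
    exact squeeze_zero h0 hb hg
  · -- the Rquot bound
    intro n
    show Rquot (pol (A n)) ≤ ρ' / ((pol (A n)).natDegree : ℝ)
    rw [Rquot]
    have hden : (0:ℝ) < (coeffSum (pol (A n)))^2 := by
      rw [hcsq n]
      have h8 : 0 < (Bset P n).card * L := Nat.mul_pos (hbpos n) hLpos
      have h9 : (0:ℝ) < (((Bset P n).card * L : ℕ) : ℝ) := by exact_mod_cast h8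
      exact pow_pos h9 2
    have hdegposR : (0:ℝ) < ((pol (A n)).natDegree : ℝ) := by
      exact_mod_cast hdegpos n
    rw [div_le_div_iff₀ hden hdegposR]
    have hKM := K_mul_M_le P hP n (1+ε/2) (hprod n)
    have hdegR : ((pol (A n)).natDegree : ℝ) ≤ (NmAux.ModP P n : ℝ) * ((d:ℝ)+1) := by
      have h7 := Nat.le_of_lt (hdegup n)
      calc ((pol (A n)).natDegree : ℝ) ≤ ((NmAux.ModP P n * (d+1) : ℕ) : ℝ) := by
            exact_mod_cast h7
        _ = (NmAux.ModP P n : ℝ) * ((d:ℝ)+1) := by push_cast; ring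
    have hnum : ρ * (1+ε/2) * ((d:ℝ)+1) ≤ ρ' * d := by
      have hεd : (4:ℝ) ≤ ε * d := by
        rw [div_le_iff₀ hεpos] at hd4
        linarith
      have hA1 : ρ*ε*(d:ℝ) ≤ δ*d := mul_le_mul_of_nonneg_right hεδ hdR.le
      have hB1 : 0 ≤ ρ*(ε*d - 4) := mul_nonneg hρ.le (by linarith)
      have hC1 : 0 ≤ ρ*(2 - ε) := mul_nonneg hρ.le (by linarith)
      have hδ1 : δ = ρ' - ρ := hδ
      nlinarith [hA1, hB1, hC1]
    have hdne : (d:ℝ) ≠ 0 := hdR.ne'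
    calc maxCoeff (pol (A n)^2) * ((pol (A n)).natDegree : ℝ)
        ≤ (((∏ j ∈ Finset.range n, (P j + 1) / 4 : ℕ) : ℝ) * X)
            * ((pol (A n)).natDegree : ℝ) :=
          mul_le_mul_of_nonneg_right (hmax2 n) (Nat.cast_nonneg _)
      _ ≤ (((∏ j ∈ Finset.range n, (P j + 1) / 4 : ℕ) : ℝ) * X)
            * ((NmAux.ModP P n : ℝ) * ((d:ℝ)+1)) := by
          apply mul_le_mul_of_nonneg_left hdegR
          exact mul_nonneg (Nat.cast_nonneg _) hXnn
      _ = (X * ((d:ℝ)+1)) * (((∏ j ∈ Finset.range n, (P j + 1) / 4 : ℕ) : ℝ)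
            * (NmAux.ModP P n : ℝ)) := by ring
      _ ≤ (X * ((d:ℝ)+1)) * ((1+ε/2) * ((Bset P n).card : ℝ)^2) := by
          apply mul_le_mul_of_nonneg_left hKM
          apply mul_nonneg hXnn
          positivity
      _ = (ρ*(1+ε/2)*((d:ℝ)+1)) * (((Bset P n).card : ℝ)^2*(L:ℝ)^2) / d := by
          rw [hX]; ring
      _ ≤ (ρ'*(d:ℝ)) * (((Bset P n).card : ℝ)^2*(L:ℝ)^2) / d := by
          apply div_le_div_of_nonneg_right _ hdR.le
          exact mul_le_mul_of_nonneg_right hnum (mul_nonneg (sq_nonneg _) (sq_nonneg _))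
      _ = ρ' * (coeffSum (pol (A n)))^2 := by
          rw [hcsq n]
          push_cast
          rw [div_eq_iff hdne]
          ring
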